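/- arXiv:1609.02824 — 2 statements merged into one kernel-verified Lean document; each statement's English description precedes it below -/
import Mathlib

section
/- (Switching principle II, first identity.) Let G = (V,E) be a finite simple graph with edge weights K : E → ℂ, let x_1, …, x_{2n} ∈ V be distinct vertices and ℓ_1*, …, ℓ_{2n}* ⊆ E be disorder edge sets satisfying the intersection-parity hypothesis. Then for every k ∈ {2, …, 2n}: W^{(2)}_{G,K}( ({x_1, x_k}, {ℓ_1*, ℓ_k*}), ({x_2, …, x_{2n}} ∖ {x_k}, {ℓ_2*, …, ℓ_{2n}*} ∖ {ℓ_k*}); x_1 ↔ x_k ) = (−1)^k · W^{(2)}_{G,K}( (∅, ∅), ({x_1, …, x_{2n}}, {ℓ_1*, …, ℓ_{2n}*}); x_1 ↔ x_k ). -/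
open scoped Classical symmDiff
open Finset

/-- `ω` is a dimer cover (perfect matching) of the graph `G` depleted by the
monomer set `M`. -/
def IsDimerCover {V : Type*} (G : SimpleGraph V) (M : Finset V)
    (ω : Finset (Sym2 V)) : Prop :=
  (∀ e ∈ ω, e ∈ G.edgeSet) ∧
  (∀ v ∈ M, ∀ e ∈ ω, v ∉ e) ∧
  (∀ v : V, v ∉ M → ∃! e, e ∈ ω ∧ v ∈ e)

/-- The spanning subgraph of the overlay `ω₁ Δ ω₂`. -/
def symmGraph {V : Type*} [DecidableEq V] (ω₁ ω₂ : Finset (Sym2 V)) : SimpleGraph V :=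
  SimpleGraph.fromEdgeSet (↑(ω₁ ∆ ω₂) : Set (Sym2 V))

/-- The order–disorder double dimer amplitude `W²_{G,K}((M₁,𝓛₁),(M₂,𝓛₂); C)`:
`M₁, M₂` are monomer sets, `L₁, L₂ ⊆ ℕ` are the labels of the disorder edge sets
(`j ↦ ℓ j`) attached to the two replicas, and `C` is a list of pairs of vertices,
each required to lie in a common connected component of the overlay `ω₁ Δ ω₂`. -/
noncomputable def Wdouble {V : Type*} [Fintype V] [DecidableEq V]
    (G : SimpleGraph V) (K : Sym2 V → ℂ) (ℓ : ℕ → Finset (Sym2 V))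
    (M₁ : Finset V) (L₁ : Finset ℕ) (M₂ : Finset V) (L₂ : Finset ℕ)
    (C : List (V × V)) : ℂ :=
  ∑ p ∈ Finset.univ.filter (fun p : Finset (Sym2 V) × Finset (Sym2 V) =>
      IsDimerCover G M₁ p.1 ∧ IsDimerCover G M₂ p.2 ∧
      ∀ c ∈ C, (symmGraph p.1 p.2).Reachable c.1 c.2),
    ((∏ b ∈ p.1, K b) * (-1 : ℂ) ^ (∑ j ∈ L₁, (p.1 ∩ ℓ j).card)) *
      ((∏ b ∈ p.2, K b) * (-1 : ℂ) ^ (∑ j ∈ L₂, (p.2 ∩ ℓ j).card))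


namespace SwitchAux

variable {V : Type*} {H : SimpleGraph V}

lemma exists_last_edge : ∀ {c u : V} (Q : H.Walk c u), c ≠ u → ∃ v, s(u, v) ∈ Q.edges := by
  intro c u Q
  induction Q with
  | nil => intro h; exact absurd rfl h
  | @cons c d u h q ih =>
    intro _
    by_cases hdu : d = u
    · subst hdu
      exact ⟨c, by simp [Sym2.eq_swap]⟩
    · obtain ⟨v, hv⟩ := ih hdu
      exact ⟨v, by simp [hv]⟩

lemma exists_first_edge {c u : V} (Q : H.Walk u c) (h : u ≠ c) : ∃ v, s(u, v) ∈ Q.edges := by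
  cases Q with
  | nil => exact absurd rfl h
  | @cons u d c h' q => exact ⟨d, by simp⟩

lemma interior_two [DecidableEq V] {a b u : V} (P : H.Walk a b) (hP : P.IsPath)
    (hu : u ∈ P.support) (hua : u ≠ a) (hub : u ≠ b) :
    ∃ v w, v ≠ w ∧ s(u, v) ∈ P.edges ∧ s(u, w) ∈ P.edges := by
  obtain ⟨v, hv⟩ := exists_last_edge (P.takeUntil u hu) (Ne.symm hua)
  obtain ⟨w, hw⟩ := exists_first_edge (P.dropUntil u hu) hub
  refine ⟨v, w, ?_, P.edges_takeUntil_subset hu hv, P.edges_dropUntil_subset hu hw⟩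
  intro hvw
  subst hvw
  have hnd : P.edges.Nodup := hP.isTrail.edges_nodup
  have hsplit : ((P.takeUntil u hu).append (P.dropUntil u hu)).edges = P.edges := by
    rw [P.take_spec hu]
  rw [SimpleGraph.Walk.edges_append] at hsplit
  rw [← hsplit, List.nodup_append] at hnd
  exact hnd.2.2 _ hv _ hw rfl

lemma support_closed [DecidableEq V] {a b : V}
    (hdeg2 : ∀ v u w z, H.Adj v u → H.Adj v w → H.Adj v z → u = w ∨ u = z ∨ w = z)
    (ha : ∀ u w, H.Adj a u → H.Adj a w → u = w)
    (hb : ∀ u w, H.Adj b u → H.Adj b w → u = w)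
    (hab : a ≠ b) (P : H.Walk a b) (hP : P.IsPath) :
    ∀ u z, u ∈ P.support → H.Adj u z → z ∈ P.support := by
  intro u z hu hz
  by_cases hua : u = a
  · subst hua
    obtain ⟨v, hv⟩ := exists_first_edge P hab
    have hadj : H.Adj u v := (H.mem_edgeSet).1 (P.edges_subset_edgeSet hv)
    have hzv : z = v := ha z v hz hadj
    subst hzv
    exact P.snd_mem_support_of_mem_edges hv
  by_cases hub : u = b
  · subst hub
    obtain ⟨v, hv⟩ := exists_last_edge P hab
    have hadj : H.Adj u v := (H.mem_edgeSet).1 (P.edges_subset_edgeSet hv)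
    have hzv : z = v := hb z v hz hadj
    subst hzv
    exact P.snd_mem_support_of_mem_edges hv
  · obtain ⟨v, w, hvw, hv, hw⟩ := interior_two P hP hu hua hub
    have hadjv : H.Adj u v := (H.mem_edgeSet).1 (P.edges_subset_edgeSet hv)
    have hadjw : H.Adj u w := (H.mem_edgeSet).1 (P.edges_subset_edgeSet hw)
    rcases hdeg2 u z v w hz hadjv hadjw with h | h | h
    · subst h; exact P.snd_mem_support_of_mem_edges hv
    · subst h; exact P.snd_mem_support_of_mem_edges hw
    · exact absurd h hvw

lemma walk_mem_closed {S : Set V} (hS : ∀ u z, u ∈ S → H.Adj u z → z ∈ S) :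
    ∀ {c d : V} (_ : H.Walk c d), c ∈ S → d ∈ S := by
  intro c d W
  induction W with
  | nil => exact id
  | cons h q ih => intro hc; exact ih (hS _ _ hc h)

lemma component_two [DecidableEq V] {a b : V}
    (hdeg2 : ∀ v u w z, H.Adj v u → H.Adj v w → H.Adj v z → u = w ∨ u = z ∨ w = z)
    (ha : ∀ u w, H.Adj a u → H.Adj a w → u = w)
    (hb : ∀ u w, H.Adj b u → H.Adj b w → u = w)
    (hab : a ≠ b) (hr : H.Reachable a b) :
    ∀ c, H.Reachable a c → (∀ u w, H.Adj c u → H.Adj c w → u = w) → c = a ∨ c = b := by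
  obtain ⟨W⟩ := hr
  set P : H.Walk a b := (W.toPath : H.Walk a b) with hPdef
  have hP : P.IsPath := W.toPath.isPath
  intro c hrc hc
  obtain ⟨Wc⟩ := hrc
  have hcsup : c ∈ P.support := by
    have hclosed : ∀ u z, u ∈ {v | v ∈ P.support} → H.Adj u z → z ∈ {v | v ∈ P.support} :=
      support_closed hdeg2 ha hb hab P hP
    exact walk_mem_closed hclosed Wc P.start_mem_support
  by_cases hca : c = a
  · exact Or.inl hca
  by_cases hcb : c = b
  · exact Or.inr hcb
  · exfalso
    obtain ⟨v, w, hvw, hv, hw⟩ := interior_two P hP hcsup hca hcb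
    exact hvw (hc v w ((H.mem_edgeSet).1 (P.edges_subset_edgeSet hv))
      ((H.mem_edgeSet).1 (P.edges_subset_edgeSet hw)))

end SwitchAux
set_option linter.unusedSectionVars false
-- Part B : cover lemmas (appended after defs of IsDimerCover/symmGraph)
namespace SwitchAux

variable {V : Type*} [Fintype V] [DecidableEq V] {G : SimpleGraph V}
variable {ω₁ ω₂ : Finset (Sym2 V)} {M₁ M₂ : Finset V}

lemma symmGraph_adj {u v : V} :
    (symmGraph ω₁ ω₂).Adj u v ↔ s(u, v) ∈ ω₁ ∆ ω₂ ∧ u ≠ v := by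
  simp only [symmGraph, SimpleGraph.fromEdgeSet_adj, Finset.mem_coe]

lemma symmGraph_comm : symmGraph ω₁ ω₂ = symmGraph ω₂ ω₁ := by
  unfold symmGraph; rw [symmDiff_comm]

lemma mem_or_of_symmDiff {e : Sym2 V} (he : e ∈ ω₁ ∆ ω₂) : e ∈ ω₁ ∨ e ∈ ω₂ := by
  rcases Finset.mem_symmDiff.1 he with ⟨h, _⟩ | ⟨h, _⟩
  · exact Or.inl h
  · exact Or.inr h

lemma symmDiff_edge (h₁ : IsDimerCover G M₁ ω₁) (h₂ : IsDimerCover G M₂ ω₂)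
    {e : Sym2 V} (he : e ∈ ω₁ ∆ ω₂) : e ∈ G.edgeSet := by
  rcases mem_or_of_symmDiff he with h | h
  · exact h₁.1 e h
  · exact h₂.1 e h

lemma exists_rep {e : Sym2 V} (he : e ∈ G.edgeSet) {v : V} (hv : v ∈ e) :
    ∃ u, u ≠ v ∧ e = s(v, u) := by
  obtain ⟨u, rfl⟩ := Sym2.mem_iff_exists.1 hv
  refine ⟨u, ?_, rfl⟩
  rintro rfl
  exact G.irrefl (G.mem_edgeSet.1 he)

lemma reach_of_mem_edge (h₁ : IsDimerCover G M₁ ω₁) (h₂ : IsDimerCover G M₂ ω₂)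
    {e : Sym2 V} (he : e ∈ ω₁ ∆ ω₂) {u v : V} (hu : u ∈ e) (hv : v ∈ e) :
    (symmGraph ω₁ ω₂).Reachable u v := by
  by_cases huv : u = v
  · subst huv; rfl
  · obtain ⟨w, hw, hrep⟩ := exists_rep (symmDiff_edge h₁ h₂ he) hu
    have hvw : v = w := by
      subst hrep
      rcases Sym2.mem_iff.1 hv with h | h
      · exact absurd h (Ne.symm huv)
      · exact h
    subst hvw
    exact (symmGraph_adj.2 ⟨hrep ▸ he, Ne.symm hw⟩).reachable

lemma mem_gamma_iff (h₁ : IsDimerCover G M₁ ω₁) (h₂ : IsDimerCover G M₂ ω₂) (a : V)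
    {e : Sym2 V} (he : e ∈ ω₁ ∆ ω₂) {v : V} (hv : v ∈ e) :
    e ∈ (ω₁ ∆ ω₂).filter
        (fun e => ∃ u, u ∈ e ∧ (symmGraph ω₁ ω₂).Reachable a u) ↔
      (symmGraph ω₁ ω₂).Reachable a v := by
  rw [Finset.mem_filter]
  constructor
  · rintro ⟨-, u, hu, hru⟩
    exact hru.trans (reach_of_mem_edge h₁ h₂ he hu hv)
  · intro h
    exact ⟨he, v, hv, h⟩

lemma deg1 (h₁ : IsDimerCover G M₁ ω₁) (h₂ : IsDimerCover G M₂ ω₂)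
    (hdisj : Disjoint M₁ M₂) {v : V} (hv : v ∈ M₁ ∪ M₂) :
    ∀ u w, (symmGraph ω₁ ω₂).Adj v u → (symmGraph ω₁ ω₂).Adj v w → u = w := by
  intro u w hu hw
  have hu' := (symmGraph_adj.1 hu).1
  have hw' := (symmGraph_adj.1 hw).1
  rcases Finset.mem_union.1 hv with hv₁ | hv₂
  · have hv₂ : v ∉ M₂ := Finset.disjoint_left.1 hdisj hv₁
    obtain ⟨e₂, -, hu₂⟩ := h₂.2.2 v hv₂
    have hmu : s(v, u) ∈ ω₂ := by
      rcases mem_or_of_symmDiff hu' with h | h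
      · exact absurd (Sym2.mem_mk_left v u) (h₁.2.1 v hv₁ _ h)
      · exact h
    have hmw : s(v, w) ∈ ω₂ := by
      rcases mem_or_of_symmDiff hw' with h | h
      · exact absurd (Sym2.mem_mk_left v w) (h₁.2.1 v hv₁ _ h)
      · exact h
    have := (hu₂ _ ⟨hmu, Sym2.mem_mk_left v u⟩).trans (hu₂ _ ⟨hmw, Sym2.mem_mk_left v w⟩).symm
    exact Sym2.congr_right.1 this
  · have hv₁ : v ∉ M₁ := fun h => Finset.disjoint_left.1 hdisj h hv₂
    obtain ⟨e₁, -, hu₁⟩ := h₁.2.2 v hv₁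
    have hmu : s(v, u) ∈ ω₁ := by
      rcases mem_or_of_symmDiff hu' with h | h
      · exact h
      · exact absurd (Sym2.mem_mk_left v u) (h₂.2.1 v hv₂ _ h)
    have hmw : s(v, w) ∈ ω₁ := by
      rcases mem_or_of_symmDiff hw' with h | h
      · exact h
      · exact absurd (Sym2.mem_mk_left v w) (h₂.2.1 v hv₂ _ h)
    have := (hu₁ _ ⟨hmu, Sym2.mem_mk_left v u⟩).trans (hu₁ _ ⟨hmw, Sym2.mem_mk_left v w⟩).symm
    exact Sym2.congr_right.1 this

lemma deg2 (h₁ : IsDimerCover G M₁ ω₁) (h₂ : IsDimerCover G M₂ ω₂)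
    (hdisj : Disjoint M₁ M₂) :
    ∀ v u w z, (symmGraph ω₁ ω₂).Adj v u → (symmGraph ω₁ ω₂).Adj v w →
      (symmGraph ω₁ ω₂).Adj v z → u = w ∨ u = z ∨ w = z := by
  intro v u w z hu hw hz
  by_cases hv : v ∈ M₁ ∪ M₂
  · exact Or.inl (deg1 h₁ h₂ hdisj hv u w hu hw)
  · have hv₁ : v ∉ M₁ := fun h => hv (Finset.mem_union_left _ h)
    have hv₂ : v ∉ M₂ := fun h => hv (Finset.mem_union_right _ h)
    obtain ⟨e₁, -, hu₁⟩ := h₁.2.2 v hv₁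
    obtain ⟨e₂, -, hu₂⟩ := h₂.2.2 v hv₂
    have key : ∀ y, (symmGraph ω₁ ω₂).Adj v y → s(v, y) = e₁ ∨ s(v, y) = e₂ := by
      intro y hy
      rcases mem_or_of_symmDiff (symmGraph_adj.1 hy).1 with h | h
      · exact Or.inl (hu₁ _ ⟨h, Sym2.mem_mk_left v y⟩)
      · exact Or.inr (hu₂ _ ⟨h, Sym2.mem_mk_left v y⟩)
    rcases key u hu with h1 | h1 <;> rcases key w hw with h2 | h2 <;>
      rcases key z hz with h3 | h3 <;>
      [ exact Or.inl (Sym2.congr_right.1 (h1.trans h2.symm));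
        exact Or.inl (Sym2.congr_right.1 (h1.trans h2.symm));
        exact Or.inr (Or.inl (Sym2.congr_right.1 (h1.trans h3.symm)));
        exact Or.inr (Or.inr (Sym2.congr_right.1 (h2.trans h3.symm)));
        exact Or.inr (Or.inr (Sym2.congr_right.1 (h2.trans h3.symm)));
        exact Or.inr (Or.inl (Sym2.congr_right.1 (h1.trans h3.symm)));
        exact Or.inl (Sym2.congr_right.1 (h1.trans h2.symm));
        exact Or.inl (Sym2.congr_right.1 (h1.trans h2.symm))]

lemma reach_endpoint (h₁ : IsDimerCover G M₁ ω₁) (h₂ : IsDimerCover G M₂ ω₂)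
    (hdisj : Disjoint M₁ M₂) {a b c : V} (ha : a ∈ M₁ ∪ M₂) (hb : b ∈ M₁ ∪ M₂)
    (hc : c ∈ M₁ ∪ M₂) (hab : a ≠ b) (hr : (symmGraph ω₁ ω₂).Reachable a b)
    (hrc : (symmGraph ω₁ ω₂).Reachable a c) : c = a ∨ c = b :=
  component_two (deg2 h₁ h₂ hdisj) (deg1 h₁ h₂ hdisj ha) (deg1 h₁ h₂ hdisj hb) hab hr c hrc
    (deg1 h₁ h₂ hdisj hc)

end SwitchAux
namespace SwitchAux

variable {V : Type*} [Fintype V] [DecidableEq V] {G : SimpleGraph V}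
variable {ω₁ ω₂ : Finset (Sym2 V)} {M₁ M₂ : Finset V}

theorem swap_cover (h₁ : IsDimerCover G M₁ ω₁) (h₂ : IsDimerCover G M₂ ω₂)
    (hdisj : Disjoint M₁ M₂) (a : V) :
    IsDimerCover G
      (M₁.filter (fun v => ¬ (symmGraph ω₁ ω₂).Reachable a v) ∪
       M₂.filter (fun v => (symmGraph ω₁ ω₂).Reachable a v))
      (ω₁ ∆ ((ω₁ ∆ ω₂).filter
        (fun e => ∃ u, u ∈ e ∧ (symmGraph ω₁ ω₂).Reachable a u))) := by
  set R : V → Prop := fun v => (symmGraph ω₁ ω₂).Reachable a v with hR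
  set γ : Finset (Sym2 V) := (ω₁ ∆ ω₂).filter
    (fun e => ∃ u, u ∈ e ∧ (symmGraph ω₁ ω₂).Reachable a u) with hγ
  have hγΔ : γ ⊆ ω₁ ∆ ω₂ := Finset.filter_subset _ _
  have hγiff : ∀ {e : Sym2 V} {v : V}, e ∈ ω₁ ∆ ω₂ → v ∈ e → (e ∈ γ ↔ R v) :=
    fun he hv => mem_gamma_iff h₁ h₂ a he hv
  have hmem : ∀ {e : Sym2 V}, e ∈ ω₁ ∆ γ ↔ (e ∈ ω₁ ∧ e ∉ γ) ∨ (e ∈ γ ∧ e ∉ ω₁) :=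
    fun {e} => Finset.mem_symmDiff
  have hγω₂ : ∀ {e : Sym2 V}, e ∈ γ → e ∉ ω₁ → e ∈ ω₂ := by
    intro e he h1
    rcases mem_or_of_symmDiff (hγΔ he) with h | h
    · exact absurd h h1
    · exact h
  refine ⟨?_, ?_, ?_⟩
  · -- edges
    intro e he
    rcases hmem.1 he with ⟨h, -⟩ | ⟨h, -⟩
    · exact h₁.1 e h
    · exact symmDiff_edge h₁ h₂ (hγΔ h)
  · -- monomers
    intro v hv e he hve
    rcases Finset.mem_union.1 hv with hv' | hv'
    · obtain ⟨hvM, hnR⟩ := Finset.mem_filter.1 hv'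
      rcases hmem.1 he with ⟨h, -⟩ | ⟨h, -⟩
      · exact h₁.2.1 v hvM e h hve
      · exact hnR ((hγiff (hγΔ h) hve).1 h)
    · obtain ⟨hvM, hrv⟩ := Finset.mem_filter.1 hv'
      rcases hmem.1 he with ⟨h, hng⟩ | ⟨h, h1⟩
      · have he2 : e ∉ ω₂ := fun h2 => h₂.2.1 v hvM e h2 hve
        have heΔ : e ∈ ω₁ ∆ ω₂ := Finset.mem_symmDiff.2 (Or.inl ⟨h, he2⟩)
        exact hng ((hγiff heΔ hve).2 hrv)
      · exact h₂.2.1 v hvM e (hγω₂ h h1) hve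
  · -- perfect matching off the monomer set
    intro v hv
    have hv₁R : v ∈ M₁ → R v := by
      intro h
      by_contra hn
      exact hv (Finset.mem_union_left _ (Finset.mem_filter.2 ⟨h, hn⟩))
    have hv₂R : v ∈ M₂ → ¬ R v := by
      intro h hn
      exact hv (Finset.mem_union_right _ (Finset.mem_filter.2 ⟨h, hn⟩))
    by_cases hvM₁ : v ∈ M₁
    · -- v ∈ M₁ and R v : covered by the ω₂-edge at v, which lies in γ
      have hrv : R v := hv₁R hvM₁
      have hvM₂ : v ∉ M₂ := Finset.disjoint_left.1 hdisj hvM₁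
      obtain ⟨e₂, ⟨he₂ω, he₂v⟩, hu₂⟩ := h₂.2.2 v hvM₂
      have he₂ω₁ : e₂ ∉ ω₁ := fun h => h₁.2.1 v hvM₁ e₂ h he₂v
      have he₂Δ : e₂ ∈ ω₁ ∆ ω₂ := Finset.mem_symmDiff.2 (Or.inr ⟨he₂ω, he₂ω₁⟩)
      have he₂γ : e₂ ∈ γ := (hγiff he₂Δ he₂v).2 hrv
      refine ⟨e₂, ⟨hmem.2 (Or.inr ⟨he₂γ, he₂ω₁⟩), he₂v⟩, ?_⟩
      rintro f ⟨hf, hvf⟩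
      rcases hmem.1 hf with ⟨h, -⟩ | ⟨h, -⟩
      · exact absurd hvf (h₁.2.1 v hvM₁ f h)
      · exact hu₂ f ⟨hγω₂ h (fun h1 => h₁.2.1 v hvM₁ f h1 hvf), hvf⟩
    by_cases hvM₂ : v ∈ M₂
    · -- v ∈ M₂ and ¬ R v : covered by the ω₁-edge at v, which is not in γ
      have hnrv : ¬ R v := hv₂R hvM₂
      obtain ⟨e₁, ⟨he₁ω, he₁v⟩, hu₁⟩ := h₁.2.2 v hvM₁
      have he₁ω₂ : e₁ ∉ ω₂ := fun h => h₂.2.1 v hvM₂ e₁ h he₁v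
      have he₁Δ : e₁ ∈ ω₁ ∆ ω₂ := Finset.mem_symmDiff.2 (Or.inl ⟨he₁ω, he₁ω₂⟩)
      have he₁γ : e₁ ∉ γ := fun h => hnrv ((hγiff he₁Δ he₁v).1 h)
      refine ⟨e₁, ⟨hmem.2 (Or.inl ⟨he₁ω, he₁γ⟩), he₁v⟩, ?_⟩
      rintro f ⟨hf, hvf⟩
      rcases hmem.1 hf with ⟨h, -⟩ | ⟨h, -⟩
      · exact hu₁ f ⟨h, hvf⟩
      · exact absurd ((hγiff (hγΔ h) hvf).1 h) hnrv
    · -- v not a monomer on either side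
      obtain ⟨e₁, ⟨he₁ω, he₁v⟩, hu₁⟩ := h₁.2.2 v hvM₁
      obtain ⟨e₂, ⟨he₂ω, he₂v⟩, hu₂⟩ := h₂.2.2 v hvM₂
      by_cases heq : e₁ = e₂
      · -- common edge : untouched
        have he₁Δ : e₁ ∉ ω₁ ∆ ω₂ := by
          rw [Finset.mem_symmDiff]
          rintro (⟨-, h⟩ | ⟨-, h⟩)
          · exact h (heq ▸ he₂ω)
          · exact h he₁ω
        have he₁γ : e₁ ∉ γ := fun h => he₁Δ (hγΔ h)
        refine ⟨e₁, ⟨hmem.2 (Or.inl ⟨he₁ω, he₁γ⟩), he₁v⟩, ?_⟩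
        rintro f ⟨hf, hvf⟩
        rcases hmem.1 hf with ⟨h, -⟩ | ⟨h, hf1⟩
        · exact hu₁ f ⟨h, hvf⟩
        · have hfe : f = e₂ := hu₂ f ⟨hγω₂ h hf1, hvf⟩
          rw [hfe, ← heq] at hf1
          exact absurd he₁ω hf1
      · -- two distinct edges at v, both in the overlay
        have he₁ω₂ : e₁ ∉ ω₂ := fun h => heq (hu₂ e₁ ⟨h, he₁v⟩)
        have he₂ω₁ : e₂ ∉ ω₁ := fun h => heq (hu₁ e₂ ⟨h, he₂v⟩).symm
        have he₁Δ : e₁ ∈ ω₁ ∆ ω₂ := Finset.mem_symmDiff.2 (Or.inl ⟨he₁ω, he₁ω₂⟩)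
        have he₂Δ : e₂ ∈ ω₁ ∆ ω₂ := Finset.mem_symmDiff.2 (Or.inr ⟨he₂ω, he₂ω₁⟩)
        by_cases hrv : R v
        · have he₂γ : e₂ ∈ γ := (hγiff he₂Δ he₂v).2 hrv
          have he₁γ : e₁ ∈ γ := (hγiff he₁Δ he₁v).2 hrv
          refine ⟨e₂, ⟨hmem.2 (Or.inr ⟨he₂γ, he₂ω₁⟩), he₂v⟩, ?_⟩
          rintro f ⟨hf, hvf⟩
          rcases hmem.1 hf with ⟨h, hf1⟩ | ⟨h, hf1⟩
          · have hfe : f = e₁ := hu₁ f ⟨h, hvf⟩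
            rw [hfe] at hf1
            exact absurd he₁γ hf1
          · exact hu₂ f ⟨hγω₂ h hf1, hvf⟩
        · have he₁γ : e₁ ∉ γ := fun h => hrv ((hγiff he₁Δ he₁v).1 h)
          refine ⟨e₁, ⟨hmem.2 (Or.inl ⟨he₁ω, he₁γ⟩), he₁v⟩, ?_⟩
          rintro f ⟨hf, hvf⟩
          rcases hmem.1 hf with ⟨h, -⟩ | ⟨h, -⟩
          · exact hu₁ f ⟨h, hvf⟩
          · exact absurd ((hγiff (hγΔ h) hvf).1 h) hrv

end SwitchAux
namespace SwitchAux

variable {V : Type*} [Fintype V] [DecidableEq V]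

/-- The switching map: symmetric difference of both replicas with the connected
component of `a` in the overlay. -/
noncomputable def swapMap (a : V) (p : Finset (Sym2 V) × Finset (Sym2 V)) :
    Finset (Sym2 V) × Finset (Sym2 V) :=
  (p.1 ∆ ((p.1 ∆ p.2).filter
      (fun e => ∃ u, u ∈ e ∧ (symmGraph p.1 p.2).Reachable a u)),
   p.2 ∆ ((p.1 ∆ p.2).filter
      (fun e => ∃ u, u ∈ e ∧ (symmGraph p.1 p.2).Reachable a u)))

lemma symmDiff_cancel_pair (a b c : Finset (Sym2 V)) : (a ∆ c) ∆ (b ∆ c) = a ∆ b := by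
  rw [symmDiff_comm b c, ← symmDiff_assoc, symmDiff_assoc a c c, symmDiff_self, symmDiff_bot]

lemma swapMap_overlay (a : V) (p : Finset (Sym2 V) × Finset (Sym2 V)) :
    (swapMap a p).1 ∆ (swapMap a p).2 = p.1 ∆ p.2 :=
  symmDiff_cancel_pair _ _ _

lemma swapMap_graph (a : V) (p : Finset (Sym2 V) × Finset (Sym2 V)) :
    symmGraph (swapMap a p).1 (swapMap a p).2 = symmGraph p.1 p.2 := by
  unfold symmGraph
  rw [swapMap_overlay]

lemma swapMap_invol (a : V) (p : Finset (Sym2 V) × Finset (Sym2 V)) :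
    swapMap a (swapMap a p) = p := by
  have hγ : ((swapMap a p).1 ∆ (swapMap a p).2).filter
      (fun e => ∃ u, u ∈ e ∧ (symmGraph (swapMap a p).1 (swapMap a p).2).Reachable a u) =
      (p.1 ∆ p.2).filter
      (fun e => ∃ u, u ∈ e ∧ (symmGraph p.1 p.2).Reachable a u) := by
    rw [swapMap_overlay, swapMap_graph]
  show ((swapMap a p).1 ∆ _, (swapMap a p).2 ∆ _) = p
  rw [hγ]
  show (p.1 ∆ _ ∆ _, p.2 ∆ _ ∆ _) = p
  rw [symmDiff_assoc, symmDiff_self, symmDiff_bot, symmDiff_assoc, symmDiff_self, symmDiff_bot]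

lemma prod_symmDiff_swap (K : Sym2 V → ℂ) {ω₁ ω₂ γ : Finset (Sym2 V)}
    (hγ : γ ⊆ ω₁ ∆ ω₂) :
    (∏ b ∈ ω₁ ∆ γ, K b) * (∏ b ∈ ω₂ ∆ γ, K b) =
      (∏ b ∈ ω₁, K b) * (∏ b ∈ ω₂, K b) := by
  have hs : ∀ ω : Finset (Sym2 V), ω ∆ γ = (ω \ γ) ∪ (γ \ ω) := by
    intro ω
    rw [symmDiff_def, Finset.sup_eq_union]
  have hg1 : γ \ ω₁ = ω₂ ∩ γ := by
    ext e
    simp only [Finset.mem_sdiff, Finset.mem_inter]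
    constructor
    · rintro ⟨heγ, h1⟩
      rcases mem_or_of_symmDiff (hγ heγ) with h | h
      · exact absurd h h1
      · exact ⟨h, heγ⟩
    · rintro ⟨h2, heγ⟩
      refine ⟨heγ, ?_⟩
      rcases Finset.mem_symmDiff.1 (hγ heγ) with ⟨-, h⟩ | ⟨-, h⟩
      · exact absurd h2 h
      · exact h
  have hg2 : γ \ ω₂ = ω₁ ∩ γ := by
    ext e
    simp only [Finset.mem_sdiff, Finset.mem_inter]
    constructor
    · rintro ⟨heγ, h2⟩
      rcases mem_or_of_symmDiff (hγ heγ) with h | h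
      · exact ⟨h, heγ⟩
      · exact absurd h h2
    · rintro ⟨h1, heγ⟩
      refine ⟨heγ, ?_⟩
      rcases Finset.mem_symmDiff.1 (hγ heγ) with ⟨-, h⟩ | ⟨-, h⟩
      · exact h
      · exact absurd h1 h
  rw [hs ω₁, hs ω₂, Finset.prod_union disjoint_sdiff_sdiff,
    Finset.prod_union disjoint_sdiff_sdiff, hg1, hg2]
  conv_rhs => rw [← Finset.sdiff_union_inter ω₁ γ, ← Finset.sdiff_union_inter ω₂ γ,
    Finset.prod_union (Finset.disjoint_sdiff_inter _ _),
    Finset.prod_union (Finset.disjoint_sdiff_inter _ _)]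
  ring

lemma card_symmDiff_aux {α : Type*} [DecidableEq α] (s t : Finset α) :
    (s ∆ t).card + 2 * (s ∩ t).card = s.card + t.card := by
  rw [symmDiff_def, Finset.sup_eq_union,
    Finset.card_union_of_disjoint disjoint_sdiff_sdiff]
  have h1 := Finset.card_sdiff_add_card_inter s t
  have h2 := Finset.card_sdiff_add_card_inter t s
  rw [Finset.inter_comm t s] at h2
  omega

lemma negpow_mod (m : ℕ) : (-1 : ℂ) ^ m = (-1) ^ (m % 2) := by
  conv_lhs => rw [← Nat.div_add_mod m 2]
  rw [pow_add, pow_mul, neg_one_sq, one_pow, one_mul]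

lemma negpow_congr {m n : ℕ} (h : m % 2 = n % 2) : (-1 : ℂ) ^ m = (-1) ^ n := by
  rw [negpow_mod m, negpow_mod n, h]

lemma negpow_inj {m n : ℕ} (h : (-1 : ℂ) ^ m = (-1) ^ n) : m % 2 = n % 2 := by
  rw [negpow_mod m, negpow_mod n] at h
  rcases Nat.mod_two_eq_zero_or_one m with hm | hm <;>
    rcases Nat.mod_two_eq_zero_or_one n with hn | hn <;>
      rw [hm, hn] at h ⊢ <;> norm_num at h

lemma zpow_sub_eq (k : ℕ) : ((-1 : ℂ)) ^ ((1 : ℤ) - (k : ℤ) - 1) = (-1 : ℂ) ^ k := by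
  have h1 : (1 : ℤ) - (k : ℤ) - 1 = -(k : ℤ) := by ring
  rw [h1, zpow_neg, zpow_natCast]
  have h2 : ((-1 : ℂ) ^ k) * ((-1 : ℂ) ^ k) = 1 := by
    rw [← pow_add]
    exact Even.neg_one_pow ⟨k, by ring⟩
  exact inv_eq_of_mul_eq_one_right h2

end SwitchAux

open SimpleGraph in
/-- Switching principle II, first identity. -/
theorem switching_principle_II_first {V : Type*} [Fintype V] [DecidableEq V]
    (G : SimpleGraph V) (K : Sym2 V → ℂ) (n : ℕ) (hn : 1 ≤ n)
    (x : ℕ → V) (ℓ : ℕ → Finset (Sym2 V))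
    (hinj : ∀ i ∈ Finset.Icc 1 (2 * n), ∀ j ∈ Finset.Icc 1 (2 * n), x i = x j → i = j)
    (hℓ : ∀ j ∈ Finset.Icc 1 (2 * n), ↑(ℓ j) ⊆ G.edgeSet)
    -- intersection-parity hypothesis: for every component `γ` of an overlay
    -- joining the monomers `x k` and `x l`, the parity of the intersection
    -- numbers with the disorder lines is `(-1)^(k-l-1)`
    (hpar : ∀ M₁ M₂ : Finset V, Disjoint M₁ M₂ →
      M₁ ∪ M₂ = (Finset.Icc 1 (2 * n)).image x →
      ∀ ω₁ ω₂ : Finset (Sym2 V), IsDimerCover G M₁ ω₁ → IsDimerCover G M₂ ω₂ →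
      ∀ k ∈ Finset.Icc 1 (2 * n), ∀ l ∈ Finset.Icc 1 (2 * n), k ≠ l →
        (symmGraph ω₁ ω₂).Reachable (x k) (x l) →
        (-1 : ℂ) ^ (∑ j ∈ Finset.Icc 1 (2 * n),
            ((((ω₁ ∆ ω₂).filter
                (fun e => ∃ u, u ∈ e ∧ (symmGraph ω₁ ω₂).Reachable (x k) u)) ∩ ℓ j).card)) *
          (-1 : ℂ) ^ ((ω₁ ∩ ℓ k).card + (ω₁ ∩ ℓ l).card +
            (ω₂ ∩ ℓ k).card + (ω₂ ∩ ℓ l).card) =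
          (-1 : ℂ) ^ ((k : ℤ) - (l : ℤ) - 1))
    (k : ℕ) (hk : k ∈ Finset.Icc 2 (2 * n)) :
    Wdouble G K ℓ {x 1, x k} {1, k}
        (((Finset.Icc 1 (2 * n)).image x) \ {x 1, x k}) ((Finset.Icc 2 (2 * n)).erase k)
        [(x 1, x k)] =
      (-1 : ℂ) ^ k *
        Wdouble G K ℓ ∅ ∅ ((Finset.Icc 1 (2 * n)).image x) (Finset.Icc 1 (2 * n))
          [(x 1, x k)] := by
  classical
  have hk2 : 2 ≤ k := (Finset.mem_Icc.1 hk).1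
  have hk2n : k ≤ 2 * n := (Finset.mem_Icc.1 hk).2
  have h1mem : (1 : ℕ) ∈ Finset.Icc 1 (2 * n) := by
    rw [Finset.mem_Icc]; omega
  have hkmem : k ∈ Finset.Icc 1 (2 * n) := by
    rw [Finset.mem_Icc]; omega
  have hk1 : (1 : ℕ) ≠ k := by omega
  have hx1k : x 1 ≠ x k := fun h => hk1 (hinj 1 h1mem k hkmem h)
  set X : Finset V := (Finset.Icc 1 (2 * n)).image x with hXdef
  have hx1X : x 1 ∈ X := Finset.mem_image_of_mem x h1mem
  have hxkX : x k ∈ X := Finset.mem_image_of_mem x hkmem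
  have hsub : ({x 1, x k} : Finset V) ⊆ X := by
    intro c hc
    rcases Finset.mem_insert.1 hc with rfl | hc
    · exact hx1X
    · rw [Finset.mem_singleton.1 hc]; exact hxkX
  have hdisjL : Disjoint ({x 1, x k} : Finset V) (X \ {x 1, x k}) := Finset.disjoint_sdiff
  have hunionL : ({x 1, x k} : Finset V) ∪ (X \ {x 1, x k}) = X :=
    Finset.union_sdiff_of_subset hsub
  have hdisjR : Disjoint (∅ : Finset V) X := by simp
  unfold Wdouble
  rw [Finset.mul_sum]
  refine Finset.sum_nbij' (SwitchAux.swapMap (x 1)) (SwitchAux.swapMap (x 1)) ?_ ?_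
    (fun p _ => SwitchAux.swapMap_invol (x 1) p)
    (fun p _ => SwitchAux.swapMap_invol (x 1) p) ?_
  · -- the map sends the LHS configurations to the RHS configurations
    intro p hp
    simp only [Finset.mem_filter, Finset.mem_univ, true_and, List.mem_singleton,
      forall_eq] at hp ⊢
    obtain ⟨hc₁, hc₂, hreach⟩ := hp
    have hXnr : ∀ c ∈ X \ ({x 1, x k} : Finset V), ¬ (symmGraph p.1 p.2).Reachable (x 1) c := by
      intro c hc hRc
      have hcU : c ∈ ({x 1, x k} : Finset V) ∪ (X \ {x 1, x k}) :=
        Finset.mem_union_right _ hc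
      have h1U : x 1 ∈ ({x 1, x k} : Finset V) ∪ (X \ {x 1, x k}) :=
        Finset.mem_union_left _ (by simp)
      have hkU : x k ∈ ({x 1, x k} : Finset V) ∪ (X \ {x 1, x k}) :=
        Finset.mem_union_left _ (by simp)
      have := SwitchAux.reach_endpoint hc₁ hc₂ hdisjL h1U hkU hcU hx1k hreach hRc
      have hcnot := (Finset.mem_sdiff.1 hc).2
      rcases this with rfl | rfl
      · exact hcnot (by simp)
      · exact hcnot (by simp)
    have hcov1 := SwitchAux.swap_cover hc₁ hc₂ hdisjL (x 1)
    have e1 : ({x 1, x k} : Finset V).filter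
        (fun v => ¬ (symmGraph p.1 p.2).Reachable (x 1) v) = ∅ := by
      rw [Finset.filter_eq_empty_iff]
      intro c hc
      rcases Finset.mem_insert.1 hc with rfl | hc
      · exact fun h => h (Reachable.refl _)
      · rw [Finset.mem_singleton.1 hc]; exact fun h => h hreach
    have e2 : (X \ ({x 1, x k} : Finset V)).filter
        (fun v => (symmGraph p.1 p.2).Reachable (x 1) v) = ∅ :=
      Finset.filter_eq_empty_iff.2 hXnr
    simp only [e1, e2, Finset.empty_union] at hcov1
    have hcov2 := SwitchAux.swap_cover hc₂ hc₁ hdisjL.symm (x 1)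
    rw [symmDiff_comm p.2 p.1, SwitchAux.symmGraph_comm (ω₁ := p.2) (ω₂ := p.1)] at hcov2
    have e3 : (X \ ({x 1, x k} : Finset V)).filter
        (fun v => ¬ (symmGraph p.1 p.2).Reachable (x 1) v) = X \ {x 1, x k} :=
      Finset.filter_eq_self.2 hXnr
    have e4 : ({x 1, x k} : Finset V).filter
        (fun v => (symmGraph p.1 p.2).Reachable (x 1) v) = {x 1, x k} := by
      rw [Finset.filter_eq_self]
      intro c hc
      rcases Finset.mem_insert.1 hc with rfl | hc
      · exact Reachable.refl _
      · rw [Finset.mem_singleton.1 hc]; exact hreach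
    simp only [e3, e4] at hcov2
    rw [Finset.sdiff_union_of_subset hsub] at hcov2
    refine ⟨hcov1, hcov2, ?_⟩
    rw [SwitchAux.swapMap_graph]
    exact hreach
  · -- the map sends the RHS configurations to the LHS configurations
    intro p hp
    simp only [Finset.mem_filter, Finset.mem_univ, true_and, List.mem_singleton,
      forall_eq] at hp ⊢
    obtain ⟨hc₁, hc₂, hreach⟩ := hp
    have hchar : ∀ c ∈ X, ((symmGraph p.1 p.2).Reachable (x 1) c ↔ (c = x 1 ∨ c = x k)) := by
      intro c hc
      constructor
      · intro hRc
        exact SwitchAux.reach_endpoint hc₁ hc₂ hdisjR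
          (Finset.mem_union_right _ hx1X) (Finset.mem_union_right _ hxkX)
          (Finset.mem_union_right _ hc) hx1k hreach hRc
      · rintro (rfl | rfl)
        · exact Reachable.refl _
        · exact hreach
    have hcov1 := SwitchAux.swap_cover hc₁ hc₂ hdisjR (x 1)
    have e1 : (∅ : Finset V).filter
        (fun v => ¬ (symmGraph p.1 p.2).Reachable (x 1) v) = ∅ := Finset.filter_empty _
    have e2 : X.filter (fun v => (symmGraph p.1 p.2).Reachable (x 1) v) = {x 1, x k} := by
      ext c
      simp only [Finset.mem_filter, Finset.mem_insert, Finset.mem_singleton]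
      constructor
      · rintro ⟨hcX, hRc⟩
        exact (hchar c hcX).1 hRc
      · rintro (rfl | rfl)
        · exact ⟨hx1X, Reachable.refl _⟩
        · exact ⟨hxkX, hreach⟩
    simp only [e1, e2, Finset.empty_union] at hcov1
    have hcov2 := SwitchAux.swap_cover hc₂ hc₁ hdisjR.symm (x 1)
    rw [symmDiff_comm p.2 p.1, SwitchAux.symmGraph_comm (ω₁ := p.2) (ω₂ := p.1)] at hcov2
    have e3 : X.filter (fun v => ¬ (symmGraph p.1 p.2).Reachable (x 1) v)
        = X \ ({x 1, x k} : Finset V) := by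
      ext c
      simp only [Finset.mem_filter, Finset.mem_sdiff, Finset.mem_insert,
        Finset.mem_singleton]
      constructor
      · rintro ⟨hcX, hnR⟩
        exact ⟨hcX, fun h => hnR ((hchar c hcX).2 h)⟩
      · rintro ⟨hcX, hne⟩
        exact ⟨hcX, fun h => hne ((hchar c hcX).1 h)⟩
    have e4 : (∅ : Finset V).filter
        (fun v => (symmGraph p.1 p.2).Reachable (x 1) v) = ∅ := Finset.filter_empty _
    simp only [e3, e4, Finset.union_empty] at hcov2
    refine ⟨hcov1, hcov2, ?_⟩
    rw [SwitchAux.swapMap_graph]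
    exact hreach
  · -- the summands match
    intro p hp
    simp only [Finset.mem_filter, Finset.mem_univ, true_and, List.mem_singleton,
      forall_eq] at hp
    obtain ⟨hc₁, hc₂, hreach⟩ := hp
    have hqs : SwitchAux.swapMap (x 1) p = (p.1 ∆ ((p.1 ∆ p.2).filter (fun e => ∃ u, u ∈ e ∧ (symmGraph p.1 p.2).Reachable (x 1) u)), p.2 ∆ ((p.1 ∆ p.2).filter (fun e => ∃ u, u ∈ e ∧ (symmGraph p.1 p.2).Reachable (x 1) u))) := rfl
    rw [hqs]
    have hparp := hpar {x 1, x k} (X \ {x 1, x k}) hdisjL hunionL p.1 p.2 hc₁ hc₂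
      1 h1mem k hkmem hk1 hreach
    push_cast at hparp
    rw [SwitchAux.zpow_sub_eq, ← pow_add] at hparp
    have hparity := SwitchAux.negpow_inj hparp
    have hprod := SwitchAux.prod_symmDiff_swap K
      (Finset.filter_subset _ (p.1 ∆ p.2) :
        ((p.1 ∆ p.2).filter (fun e => ∃ u, u ∈ e ∧ (symmGraph p.1 p.2).Reachable (x 1) u)) ⊆ p.1 ∆ p.2)
    have hS3 : (∑ j ∈ Finset.Icc 1 (2 * n), ((p.2 ∆ ((p.1 ∆ p.2).filter (fun e => ∃ u, u ∈ e ∧ (symmGraph p.1 p.2).Reachable (x 1) u))) ∩ ℓ j).card) % 2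
        = ((∑ j ∈ Finset.Icc 1 (2 * n), (p.2 ∩ ℓ j).card)
          + (∑ j ∈ Finset.Icc 1 (2 * n), (((p.1 ∆ p.2).filter (fun e => ∃ u, u ∈ e ∧ (symmGraph p.1 p.2).Reachable (x 1) u)) ∩ ℓ j).card)) % 2 := by
      rw [Finset.sum_nat_mod, ← Finset.sum_add_distrib,
        Finset.sum_nat_mod (Finset.Icc 1 (2 * n)) 2
          (fun j => (p.2 ∩ ℓ j).card + (((p.1 ∆ p.2).filter (fun e => ∃ u, u ∈ e ∧ (symmGraph p.1 p.2).Reachable (x 1) u)) ∩ ℓ j).card)]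
      congr 1
      apply Finset.sum_congr rfl
      intro j _
      have hdist : (p.2 ∆ ((p.1 ∆ p.2).filter (fun e => ∃ u, u ∈ e ∧ (symmGraph p.1 p.2).Reachable (x 1) u))) ∩ ℓ j = (p.2 ∩ ℓ j) ∆ (((p.1 ∆ p.2).filter (fun e => ∃ u, u ∈ e ∧ (symmGraph p.1 p.2).Reachable (x 1) u)) ∩ ℓ j) := by
        have h := inf_symmDiff_distrib_right p.2 ((p.1 ∆ p.2).filter (fun e => ∃ u, u ∈ e ∧ (symmGraph p.1 p.2).Reachable (x 1) u)) (ℓ j)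
        simpa [Finset.inf_eq_inter] using h
      rw [hdist]
      have := SwitchAux.card_symmDiff_aux (p.2 ∩ ℓ j) (((p.1 ∆ p.2).filter (fun e => ∃ u, u ∈ e ∧ (symmGraph p.1 p.2).Reachable (x 1) u)) ∩ ℓ j)
      omega
    have hIccdec : ∑ j ∈ Finset.Icc 1 (2 * n), (p.2 ∩ ℓ j).card
        = (p.2 ∩ ℓ 1).card + ((p.2 ∩ ℓ k).card
          + ∑ j ∈ (Finset.Icc 2 (2 * n)).erase k, (p.2 ∩ ℓ j).card) := by
      have h1 : Finset.Icc 1 (2 * n) = insert 1 (Finset.Icc 2 (2 * n)) := by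
        ext j
        simp only [Finset.mem_Icc, Finset.mem_insert]
        omega
      have h1n : (1 : ℕ) ∉ Finset.Icc 2 (2 * n) := by
        rw [Finset.mem_Icc]; omega
      rw [h1, Finset.sum_insert h1n]
      congr 1
      exact (Finset.add_sum_erase _ _ hk).symm
    have hpair : ∑ j ∈ ({1, k} : Finset ℕ), (p.1 ∩ ℓ j).card
        = (p.1 ∩ ℓ 1).card + (p.1 ∩ ℓ k).card := Finset.sum_pair hk1
    have hsign : (-1 : ℂ) ^ (∑ j ∈ ({1, k} : Finset ℕ), (p.1 ∩ ℓ j).card)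
          * (-1 : ℂ) ^ (∑ j ∈ (Finset.Icc 2 (2 * n)).erase k, (p.2 ∩ ℓ j).card)
        = (-1 : ℂ) ^ k
          * (-1 : ℂ) ^ (∑ j ∈ Finset.Icc 1 (2 * n), ((p.2 ∆ ((p.1 ∆ p.2).filter (fun e => ∃ u, u ∈ e ∧ (symmGraph p.1 p.2).Reachable (x 1) u))) ∩ ℓ j).card) := by
      rw [← pow_add, ← pow_add]
      apply SwitchAux.negpow_congr
      omega
    rw [Finset.sum_empty, pow_zero, mul_one]
    calc ((∏ b ∈ p.1, K b) * (-1 : ℂ) ^ (∑ j ∈ ({1, k} : Finset ℕ), (p.1 ∩ ℓ j).card))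
          * ((∏ b ∈ p.2, K b)
            * (-1 : ℂ) ^ (∑ j ∈ (Finset.Icc 2 (2 * n)).erase k, (p.2 ∩ ℓ j).card))
        = ((∏ b ∈ p.1, K b) * (∏ b ∈ p.2, K b))
          * ((-1 : ℂ) ^ (∑ j ∈ ({1, k} : Finset ℕ), (p.1 ∩ ℓ j).card)
            * (-1 : ℂ) ^ (∑ j ∈ (Finset.Icc 2 (2 * n)).erase k, (p.2 ∩ ℓ j).card)) := by
          ring
      _ = ((∏ b ∈ p.1 ∆ ((p.1 ∆ p.2).filter (fun e => ∃ u, u ∈ e ∧ (symmGraph p.1 p.2).Reachable (x 1) u)), K b) * (∏ b ∈ p.2 ∆ ((p.1 ∆ p.2).filter (fun e => ∃ u, u ∈ e ∧ (symmGraph p.1 p.2).Reachable (x 1) u)), K b))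
          * ((-1 : ℂ) ^ k
            * (-1 : ℂ) ^ (∑ j ∈ Finset.Icc 1 (2 * n), ((p.2 ∆ ((p.1 ∆ p.2).filter (fun e => ∃ u, u ∈ e ∧ (symmGraph p.1 p.2).Reachable (x 1) u))) ∩ ℓ j).card)) := by
          rw [hprod, hsign]
      _ = (-1 : ℂ) ^ k * ((∏ b ∈ p.1 ∆ ((p.1 ∆ p.2).filter (fun e => ∃ u, u ∈ e ∧ (symmGraph p.1 p.2).Reachable (x 1) u)), K b)
          * ((∏ b ∈ p.2 ∆ ((p.1 ∆ p.2).filter (fun e => ∃ u, u ∈ e ∧ (symmGraph p.1 p.2).Reachable (x 1) u)), K b)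
            * (-1 : ℂ) ^ (∑ j ∈ Finset.Icc 1 (2 * n), ((p.2 ∆ ((p.1 ∆ p.2).filter (fun e => ∃ u, u ∈ e ∧ (symmGraph p.1 p.2).Reachable (x 1) u))) ∩ ℓ j).card))) := by
          ring
end

section
/- (Switching principle II, second identity.) Let G = (V,E) be a finite simple graph with edge weights K : E → ℂ, let x_1, …, x_{2n} ∈ V be distinct vertices and ℓ_1*, …, ℓ_{2n}* ⊆ E be disorder edge sets satisfying the intersection-parity hypothesis. Then for all pairwise distinct k, l, m ∈ {2, …, 2n}: W^{(2)}_{G,K}( ({x_1, x_k}, {ℓ_1*, ℓ_k*}), ({x_2, …, x_{2n}} ∖ {x_k}, {ℓ_2*, …, ℓ_{2n}*} ∖ {ℓ_k*}); x_1 ↔ x_m and x_k ↔ x_l ) = (−1)^{k−l−1} · W^{(2)}_{G,K}( ({x_1, x_l}, {ℓ_1*, ℓ_l*}), ({x_2, …, x_{2n}} ∖ {x_l}, {ℓ_2*, …, ℓ_{2n}*} ∖ {ℓ_l*}); x_1 ↔ x_m and x_k ↔ x_l ). -/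
open scoped Classical symmDiff
open Finset

section Walks
variable {V : Type*} {H : SimpleGraph V}

private lemma walk_closure
    (hdeg : ∀ v u₁ u₂ u₃, H.Adj v u₁ → H.Adj v u₂ → H.Adj v u₃ → u₁ = u₂ ∨ u₁ = u₃ ∨ u₂ = u₃) :
    ∀ {b' c : V} (q : H.Walk b' c), q.IsPath →
      (∀ u₁ u₂, H.Adj c u₁ → H.Adj c u₂ → u₁ = u₂) →
      ∀ b : V, H.Adj b b' → b ∉ q.support →
      ∀ v ∈ q.support, ∀ u, H.Adj v u → u = b ∨ u ∈ q.support := by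
  intro b' c q
  induction q with
  | nil =>
    intro _ hc b hadj _ v hv u hu
    simp only [SimpleGraph.Walk.support_nil, List.mem_singleton] at hv
    subst hv
    exact Or.inl (hc u b hu hadj.symm)
  | @cons b' b'' c h q' ih =>
    intro hp hc b hadj hb v hv u hu
    simp only [SimpleGraph.Walk.support_cons, List.mem_cons] at hv hb
    push_neg at hb
    rcases hv with rfl | hv'
    · rcases hdeg v u b b'' hu hadj.symm h with rfl | rfl | hbb
      · exact Or.inl rfl
      · exact Or.inr (by simp [SimpleGraph.Walk.support_cons,
          SimpleGraph.Walk.start_mem_support])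
      · exact absurd (hbb ▸ q'.start_mem_support) hb.2
    · have hp' := (SimpleGraph.Walk.cons_isPath_iff _ _).1 hp
      rcases ih hp'.1 hc b' h hp'.2 v hv' u hu with rfl | hmem
      · exact Or.inr (by simp [SimpleGraph.Walk.support_cons])
      · exact Or.inr (by simp [SimpleGraph.Walk.support_cons, hmem])

private lemma walk_mem_closed {L : List V}
    (hcl : ∀ v ∈ L, ∀ u, H.Adj v u → u ∈ L) :
    ∀ {a b : V} (_ : H.Walk a b), a ∈ L → b ∈ L := by
  intro a b w
  induction w with
  | nil => exact id
  | cons h q ih => intro ha; exact ih (hcl _ ha _ h)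

private lemma interior_two :
    ∀ {b' c : V} (q : H.Walk b' c), q.IsPath →
      ∀ b : V, H.Adj b b' → b ∉ q.support →
      ∀ v ∈ q.support, v ≠ c → ∃ u₁ u₂, u₁ ≠ u₂ ∧ H.Adj v u₁ ∧ H.Adj v u₂ := by
  intro b' c q
  induction q with
  | nil =>
    intro _ b _ _ v hv hvc
    simp only [SimpleGraph.Walk.support_nil, List.mem_singleton] at hv
    exact absurd hv hvc
  | @cons b' b'' c h q' ih =>
    intro hp b hadj hb v hv hvc
    simp only [SimpleGraph.Walk.support_cons, List.mem_cons] at hv hb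
    push_neg at hb
    have hp' := (SimpleGraph.Walk.cons_isPath_iff _ _).1 hp
    rcases hv with rfl | hv'
    · refine ⟨b, b'', ?_, hadj.symm, h⟩
      intro hbb
      exact hb.2 (hbb ▸ q'.start_mem_support)
    · exact ih hp'.1 b' h hp'.2 v hv' hvc

private lemma no_third_leaf
    (hdeg : ∀ v u₁ u₂ u₃, H.Adj v u₁ → H.Adj v u₂ → H.Adj v u₃ → u₁ = u₂ ∨ u₁ = u₃ ∨ u₂ = u₃)
    {b c a : V}
    (hbleaf : ∀ u₁ u₂, H.Adj b u₁ → H.Adj b u₂ → u₁ = u₂)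
    (hcleaf : ∀ u₁ u₂, H.Adj c u₁ → H.Adj c u₂ → u₁ = u₂)
    (haleaf : ∀ u₁ u₂, H.Adj a u₁ → H.Adj a u₂ → u₁ = u₂)
    (hbc : b ≠ c) (hab : a ≠ b) (hac : a ≠ c)
    (h1 : H.Reachable b c) (h2 : H.Reachable b a) : False := by
  obtain ⟨w⟩ := h1
  set P : H.Walk b c := (w.toPath : H.Path b c).1 with hPdef
  have hP : P.IsPath := (w.toPath : H.Path b c).2
  have hclosed : ∀ v ∈ P.support, ∀ u, H.Adj v u → u ∈ P.support := by
    cases hQ : P with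
    | nil => exact absurd rfl hbc
    | @cons _ b'' _ h q =>
      intro v hv u hu
      rw [hQ] at hP
      have hp' := (SimpleGraph.Walk.cons_isPath_iff _ _).1 hP
      simp only [SimpleGraph.Walk.support_cons, List.mem_cons] at hv ⊢
      rcases hv with rfl | hv'
      · right; exact (hbleaf u b'' hu h) ▸ q.start_mem_support
      · rcases walk_closure hdeg q hp'.1 hcleaf _ h hp'.2 v hv' u hu with rfl | hm
        · exact Or.inl rfl
        · exact Or.inr hm
  obtain ⟨w2⟩ := h2
  have haP : a ∈ P.support := walk_mem_closed hclosed w2 P.start_mem_support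
  cases hQ : P with
  | nil =>
    rw [hQ] at haP
    simp only [SimpleGraph.Walk.support_nil, List.mem_singleton] at haP
    exact hab haP
  | @cons _ b'' _ h q =>
    rw [hQ] at hP haP
    have hp' := (SimpleGraph.Walk.cons_isPath_iff _ _).1 hP
    simp only [SimpleGraph.Walk.support_cons, List.mem_cons] at haP
    rcases haP with rfl | haP'
    · exact hab rfl
    · obtain ⟨u₁, u₂, hne, hu₁, hu₂⟩ := interior_two q hp'.1 _ h hp'.2 a haP' hac
      exact hne (haleaf u₁ u₂ hu₁ hu₂)

end Walks

section Helpers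
variable {V : Type*} [Fintype V] [DecidableEq V]

lemma IsDimerCover.edge_unique {G : SimpleGraph V} {M : Finset V} {ω : Finset (Sym2 V)}
    (h : IsDimerCover G M ω) {e₁ e₂ : Sym2 V} {v : V}
    (h₁ : e₁ ∈ ω) (h₂ : e₂ ∈ ω) (hv₁ : v ∈ e₁) (hv₂ : v ∈ e₂) : e₁ = e₂ := by
  by_cases hM : v ∈ M
  · exact absurd hv₁ (h.2.1 v hM e₁ h₁)
  · obtain ⟨e, -, hu⟩ := h.2.2 v hM
    rw [hu e₁ ⟨h₁, hv₁⟩, hu e₂ ⟨h₂, hv₂⟩]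

lemma symmGraph_adj {ω₁ ω₂ : Finset (Sym2 V)} {u v : V} :
    (symmGraph ω₁ ω₂).Adj u v ↔ s(u, v) ∈ ω₁ ∆ ω₂ ∧ u ≠ v := by
  rw [symmGraph, SimpleGraph.fromEdgeSet_adj, Finset.mem_coe]

lemma reach_of_mem_edge {ω₁ ω₂ : Finset (Sym2 V)} {e : Sym2 V} {u v : V}
    (he : e ∈ ω₁ ∆ ω₂) (hu : u ∈ e) (hv : v ∈ e) :
    (symmGraph ω₁ ω₂).Reachable u v := by
  by_cases huv : u = v
  · exact huv ▸ SimpleGraph.Reachable.refl u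
  · have : e = s(u, v) := (Sym2.mem_and_mem_iff huv).1 ⟨hu, hv⟩
    exact (symmGraph_adj.2 ⟨this ▸ he, huv⟩).reachable

lemma mem_symmDiff_or {ω₁ ω₂ : Finset (Sym2 V)} {e : Sym2 V} (he : e ∈ ω₁ ∆ ω₂) :
    e ∈ ω₁ ∨ e ∈ ω₂ := by
  rw [Finset.mem_symmDiff] at he; tauto

lemma mem_right_of_monomer {G : SimpleGraph V} {M₁ : Finset V} {ω₁ ω₂ : Finset (Sym2 V)}
    (h₁ : IsDimerCover G M₁ ω₁) {v : V} (hv : v ∈ M₁) {e : Sym2 V}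
    (he : e ∈ ω₁ ∆ ω₂) (hve : v ∈ e) : e ∈ ω₂ := by
  rw [Finset.mem_symmDiff] at he
  rcases he with ⟨h, -⟩ | ⟨h, -⟩
  · exact absurd hve (h₁.2.1 v hv e h)
  · exact h

lemma leaf_of_monomer {G : SimpleGraph V} {M₁ M₂ : Finset V} {ω₁ ω₂ : Finset (Sym2 V)}
    (h₁ : IsDimerCover G M₁ ω₁) (h₂ : IsDimerCover G M₂ ω₂) {v : V}
    (hv : v ∈ M₁ ∨ v ∈ M₂) :
    ∀ u₁ u₂, (symmGraph ω₁ ω₂).Adj v u₁ → (symmGraph ω₁ ω₂).Adj v u₂ → u₁ = u₂ := by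
  intro u₁ u₂ ha₁ ha₂
  rw [symmGraph_adj] at ha₁ ha₂
  have hm1 : v ∈ s(v, u₁) := Sym2.mem_mk_left v u₁
  have hm2 : v ∈ s(v, u₂) := Sym2.mem_mk_left v u₂
  rcases hv with hv | hv
  · exact Sym2.congr_right.1
      (h₂.edge_unique (mem_right_of_monomer h₁ hv ha₁.1 hm1)
        (mem_right_of_monomer h₁ hv ha₂.1 hm2) hm1 hm2)
  · have hsymm : ∀ {e : Sym2 V}, e ∈ ω₁ ∆ ω₂ → v ∈ e → e ∈ ω₁ := by
      intro e he hve
      exact mem_right_of_monomer (ω₂ := ω₁) h₂ hv (symmDiff_comm ω₁ ω₂ ▸ he) hve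
    exact Sym2.congr_right.1
      (h₁.edge_unique (hsymm ha₁.1 hm1) (hsymm ha₂.1 hm2) hm1 hm2)

lemma overlay_deg_le_two {G : SimpleGraph V} {M₁ M₂ : Finset V} {ω₁ ω₂ : Finset (Sym2 V)}
    (h₁ : IsDimerCover G M₁ ω₁) (h₂ : IsDimerCover G M₂ ω₂) :
    ∀ v u₁ u₂ u₃, (symmGraph ω₁ ω₂).Adj v u₁ → (symmGraph ω₁ ω₂).Adj v u₂ →
      (symmGraph ω₁ ω₂).Adj v u₃ → u₁ = u₂ ∨ u₁ = u₃ ∨ u₂ = u₃ := by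
  intro v u₁ u₂ u₃ ha₁ ha₂ ha₃
  rw [symmGraph_adj] at ha₁ ha₂ ha₃
  have hm1 : v ∈ s(v, u₁) := Sym2.mem_mk_left v u₁
  have hm2 : v ∈ s(v, u₂) := Sym2.mem_mk_left v u₂
  have hm3 : v ∈ s(v, u₃) := Sym2.mem_mk_left v u₃
  rcases mem_symmDiff_or ha₁.1 with h1 | h1 <;>
    rcases mem_symmDiff_or ha₂.1 with h2 | h2 <;>
      rcases mem_symmDiff_or ha₃.1 with h3 | h3
  · exact Or.inl (Sym2.congr_right.1 (h₁.edge_unique h1 h2 hm1 hm2))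
  · exact Or.inl (Sym2.congr_right.1 (h₁.edge_unique h1 h2 hm1 hm2))
  · exact Or.inr (Or.inl (Sym2.congr_right.1 (h₁.edge_unique h1 h3 hm1 hm3)))
  · exact Or.inr (Or.inr (Sym2.congr_right.1 (h₂.edge_unique h2 h3 hm2 hm3)))
  · exact Or.inr (Or.inr (Sym2.congr_right.1 (h₁.edge_unique h2 h3 hm2 hm3)))
  · exact Or.inr (Or.inl (Sym2.congr_right.1 (h₂.edge_unique h1 h3 hm1 hm3)))
  · exact Or.inl (Sym2.congr_right.1 (h₂.edge_unique h1 h2 hm1 hm2))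
  · exact Or.inl (Sym2.congr_right.1 (h₂.edge_unique h1 h2 hm1 hm2))

lemma swap_mem {A B γ' : Finset (Sym2 V)} {e : Sym2 V} (hin : e ∈ γ' ↔ e ∈ A ∆ B) :
    e ∈ A ∆ γ' ↔ e ∈ B := by
  simp only [Finset.mem_symmDiff] at hin ⊢; tauto

lemma stay_mem {A γ' : Finset (Sym2 V)} {e : Sym2 V} (h1 : e ∉ γ') :
    e ∈ A ∆ γ' ↔ e ∈ A := by
  simp only [Finset.mem_symmDiff]; tauto

/-- the connected component of `w` in the overlay, as an edge set -/
noncomputable def gam (ω₁ ω₂ : Finset (Sym2 V)) (w : V) : Finset (Sym2 V) :=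
  (ω₁ ∆ ω₂).filter (fun e => ∃ u, u ∈ e ∧ (symmGraph ω₁ ω₂).Reachable w u)

lemma gam_def (ω₁ ω₂ : Finset (Sym2 V)) (w : V) :
    gam ω₁ ω₂ w =
      (ω₁ ∆ ω₂).filter (fun e => ∃ u, u ∈ e ∧ (symmGraph ω₁ ω₂).Reachable w u) := rfl

lemma gam_subset (ω₁ ω₂ : Finset (Sym2 V)) (w : V) : gam ω₁ ω₂ w ⊆ ω₁ ∆ ω₂ :=
  Finset.filter_subset _ _

lemma gamma_iff_reach {ω₁ ω₂ : Finset (Sym2 V)} {w v : V} {e : Sym2 V}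
    (hv : (symmGraph ω₁ ω₂).Reachable w v) (hve : v ∈ e) :
    e ∈ gam ω₁ ω₂ w ↔ e ∈ ω₁ ∆ ω₂ := by
  rw [gam_def]
  simp only [Finset.mem_filter]
  exact ⟨fun h => h.1, fun h => ⟨h, v, hve, hv⟩⟩

lemma gamma_not_mem {ω₁ ω₂ : Finset (Sym2 V)} {w v : V} {e : Sym2 V}
    (hv : ¬ (symmGraph ω₁ ω₂).Reachable w v) (hve : v ∈ e) :
    e ∉ gam ω₁ ω₂ w := by
  intro hmem
  obtain ⟨hD, u, hu, hru⟩ := Finset.mem_filter.1 hmem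
  exact hv (hru.trans (reach_of_mem_edge hD hu hve))

lemma overlay_swap_eq (A B γ' : Finset (Sym2 V)) : (A ∆ γ') ∆ (B ∆ γ') = A ∆ B := by
  ext e; simp only [Finset.mem_symmDiff]; tauto

lemma symmGraph_swap (A B γ' : Finset (Sym2 V)) :
    symmGraph (A ∆ γ') (B ∆ γ') = symmGraph A B := by
  unfold symmGraph; rw [overlay_swap_eq]

lemma gamma_rebase {ω₁ ω₂ : Finset (Sym2 V)} {a b : V}
    (h : (symmGraph ω₁ ω₂).Reachable a b) :
    gam ω₁ ω₂ a = gam ω₁ ω₂ b := by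
  rw [gam_def, gam_def]
  apply Finset.filter_congr
  intro e _
  constructor
  · rintro ⟨u, hu, hru⟩; exact ⟨u, hu, h.symm.trans hru⟩
  · rintro ⟨u, hu, hru⟩; exact ⟨u, hu, h.trans hru⟩

lemma gam_swap_invariant (ω₁ ω₂ : Finset (Sym2 V)) (w : V) :
    gam (ω₁ ∆ gam ω₁ ω₂ w) (ω₂ ∆ gam ω₁ ω₂ w) w = gam ω₁ ω₂ w := by
  unfold gam
  rw [overlay_swap_eq, symmGraph_swap]

end Helpers

section Swap

variable {V : Type*} [Fintype V] [DecidableEq V]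

lemma swap_covers {G : SimpleGraph V} {n : ℕ} (hn : 1 ≤ n) {x : ℕ → V}
    (hinj : ∀ i ∈ Finset.Icc 1 (2 * n), ∀ j ∈ Finset.Icc 1 (2 * n), x i = x j → i = j)
    {κ lam : ℕ} (hκ : κ ∈ Finset.Icc 2 (2 * n)) (hlam : lam ∈ Finset.Icc 2 (2 * n))
    (hne : κ ≠ lam) {ω₁ ω₂ : Finset (Sym2 V)}
    (h₁ : IsDimerCover G {x 1, x κ} ω₁)
    (h₂ : IsDimerCover G (((Finset.Icc 1 (2 * n)).image x) \ {x 1, x κ}) ω₂)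
    (hreach : (symmGraph ω₁ ω₂).Reachable (x κ) (x lam)) :
    IsDimerCover G {x 1, x lam} (ω₁ ∆ gam ω₁ ω₂ (x κ)) ∧
      IsDimerCover G (((Finset.Icc 1 (2 * n)).image x) \ {x 1, x lam})
        (ω₂ ∆ gam ω₁ ω₂ (x κ)) := by
  set R : V → Prop := fun v => (symmGraph ω₁ ω₂).Reachable (x κ) v with hRdef
  have hκ1 : κ ∈ Finset.Icc 1 (2 * n) := by
    simp only [Finset.mem_Icc] at hκ ⊢; omega
  have hlam1 : lam ∈ Finset.Icc 1 (2 * n) := by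
    simp only [Finset.mem_Icc] at hlam ⊢; omega
  have h1mem : 1 ∈ Finset.Icc 1 (2 * n) := by
    simp only [Finset.mem_Icc]; omega
  have hκ2 : 2 ≤ κ := (Finset.mem_Icc.1 hκ).1
  have hlam2 : 2 ≤ lam := (Finset.mem_Icc.1 hlam).1
  have hx1κ : x 1 ≠ x κ := fun h => by have := hinj 1 h1mem κ hκ1 h; omega
  have hx1lam : x 1 ≠ x lam := fun h => by have := hinj 1 h1mem lam hlam1 h; omega
  have hxκlam : x κ ≠ x lam := fun h => hne (hinj κ hκ1 lam hlam1 h)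
  have hlamM₂ : x lam ∈ ((Finset.Icc 1 (2 * n)).image x) \ {x 1, x κ} := by
    rw [Finset.mem_sdiff]
    refine ⟨Finset.mem_image.2 ⟨lam, hlam1, rfl⟩, ?_⟩
    simp only [Finset.mem_insert, Finset.mem_singleton]
    push_neg
    exact ⟨fun h => hx1lam h.symm, fun h => hxκlam h.symm⟩
  have hdeg := overlay_deg_le_two h₁ h₂
  have hleafκ := leaf_of_monomer h₁ h₂ (v := x κ) (Or.inl (by simp))
  have hleaflam := leaf_of_monomer h₁ h₂ (Or.inr hlamM₂)
  have hnoR : ∀ j ∈ Finset.Icc 1 (2 * n), j ≠ κ → j ≠ lam → ¬ R (x j) := by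
    intro j hj hjκ hjlam hR
    have hxjκ : x j ≠ x κ := fun h => hjκ (hinj j hj κ hκ1 h)
    have hxjlam : x j ≠ x lam := fun h => hjlam (hinj j hj lam hlam1 h)
    have hleafj := leaf_of_monomer h₁ h₂ (v := x j) (by
      by_cases hcase : x j ∈ ({x 1, x κ} : Finset V)
      · exact Or.inl hcase
      · exact Or.inr (Finset.mem_sdiff.2 ⟨Finset.mem_image.2 ⟨j, hj, rfl⟩, hcase⟩))
    exact no_third_leaf hdeg hleafκ hleaflam hleafj hxκlam hxjκ hxjlam hreach hR
  have hnR1 : ¬ R (x 1) := hnoR 1 h1mem (by omega) (by omega)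
  have hRκ : R (x κ) := SimpleGraph.Reachable.refl _
  have hRlam : R (x lam) := hreach
  have hedge : ∀ e ∈ ω₁ ∆ ω₂, e ∈ G.edgeSet :=
    fun e he => (mem_symmDiff_or he).elim (h₁.1 e) (h₂.1 e)
  have hγsub : gam ω₁ ω₂ (x κ) ⊆ ω₁ ∆ ω₂ := gam_subset _ _ _
  have hswap₁ : ∀ {v : V} {e : Sym2 V}, R v → v ∈ e → (e ∈ ω₁ ∆ gam ω₁ ω₂ (x κ) ↔ e ∈ ω₂) :=
    fun hRv hve => swap_mem (gamma_iff_reach hRv hve)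
  have hswap₂ : ∀ {v : V} {e : Sym2 V}, R v → v ∈ e → (e ∈ ω₂ ∆ gam ω₁ ω₂ (x κ) ↔ e ∈ ω₁) :=
    fun hRv hve =>
      swap_mem ((gamma_iff_reach hRv hve).trans (by rw [symmDiff_comm]))
  have hstay₁ : ∀ {v : V} {e : Sym2 V}, ¬ R v → v ∈ e → (e ∈ ω₁ ∆ gam ω₁ ω₂ (x κ) ↔ e ∈ ω₁) :=
    fun hRv hve => stay_mem (gamma_not_mem hRv hve)
  have hstay₂ : ∀ {v : V} {e : Sym2 V}, ¬ R v → v ∈ e → (e ∈ ω₂ ∆ gam ω₁ ω₂ (x κ) ↔ e ∈ ω₂) :=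
    fun hRv hve => stay_mem (gamma_not_mem hRv hve)
  constructor
  · refine ⟨?_, ?_, ?_⟩
    · intro e he
      rcases mem_symmDiff_or he with h | h
      · exact h₁.1 e h
      · exact hedge e (hγsub h)
    · intro v hv e he hve
      rcases Finset.mem_insert.1 hv with h | hv'
      · subst h
        exact absurd hve (h₁.2.1 _ (by simp) e ((hstay₁ hnR1 hve).1 he))
      · rw [Finset.mem_singleton] at hv'
        subst hv'
        exact absurd hve (h₂.2.1 _ hlamM₂ e ((hswap₁ hRlam hve).1 he))
    · intro v hv
      simp only [Finset.mem_insert, Finset.mem_singleton] at hv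
      push_neg at hv
      by_cases hRv : R v
      · have hvM₂ : v ∉ ((Finset.Icc 1 (2 * n)).image x) \ {x 1, x κ} := by
          intro hvM
          obtain ⟨hvim, hvn⟩ := Finset.mem_sdiff.1 hvM
          obtain ⟨j, hj, rfl⟩ := Finset.mem_image.1 hvim
          simp only [Finset.mem_insert, Finset.mem_singleton] at hvn
          push_neg at hvn
          have hjκ : j ≠ κ := fun h => hvn.2 (by rw [h])
          have hjlam : j ≠ lam := fun h => hv.2 (by rw [h])
          exact hnoR j hj hjκ hjlam hRv
        obtain ⟨e, he, hu⟩ := h₂.2.2 v hvM₂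
        exact ⟨e, ⟨(hswap₁ hRv he.2).2 he.1, he.2⟩,
          fun e' he' => hu e' ⟨(hswap₁ hRv he'.2).1 he'.1, he'.2⟩⟩
      · have hvM₁ : v ∉ ({x 1, x κ} : Finset V) := by
          simp only [Finset.mem_insert, Finset.mem_singleton]
          push_neg
          exact ⟨hv.1, fun h => hRv (h ▸ hRκ)⟩
        obtain ⟨e, he, hu⟩ := h₁.2.2 v hvM₁
        exact ⟨e, ⟨(hstay₁ hRv he.2).2 he.1, he.2⟩,
          fun e' he' => hu e' ⟨(hstay₁ hRv he'.2).1 he'.1, he'.2⟩⟩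
  · refine ⟨?_, ?_, ?_⟩
    · intro e he
      rcases mem_symmDiff_or he with h | h
      · exact h₂.1 e h
      · exact hedge e (hγsub h)
    · intro v hv e he hve
      obtain ⟨hvim, hvn⟩ := Finset.mem_sdiff.1 hv
      simp only [Finset.mem_insert, Finset.mem_singleton] at hvn
      push_neg at hvn
      obtain ⟨j, hj, rfl⟩ := Finset.mem_image.1 hvim
      by_cases hRv : R (x j)
      · have hjκ : j = κ := by
          by_contra hjκ
          have hjlam : j ≠ lam := fun h => hvn.2 (by rw [h])
          exact hnoR j hj hjκ hjlam hRv
        subst hjκ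
        exact absurd hve (h₁.2.1 (x j) (by simp) e ((hswap₂ hRv hve).1 he))
      · have hvM₂ : x j ∈ ((Finset.Icc 1 (2 * n)).image x) \ {x 1, x κ} := by
          rw [Finset.mem_sdiff]
          refine ⟨hvim, ?_⟩
          simp only [Finset.mem_insert, Finset.mem_singleton]
          push_neg
          exact ⟨hvn.1, fun h => hRv (h ▸ hRκ)⟩
        exact absurd hve (h₂.2.1 (x j) hvM₂ e ((hstay₂ hRv hve).1 he))
    · intro v hv
      by_cases hRv : R v
      · have hvM₁ : v ∉ ({x 1, x κ} : Finset V) := by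
          simp only [Finset.mem_insert, Finset.mem_singleton]
          push_neg
          refine ⟨fun h => hnR1 (h ▸ hRv), fun h => ?_⟩
          subst h
          refine hv (Finset.mem_sdiff.2 ⟨Finset.mem_image.2 ⟨κ, hκ1, rfl⟩, ?_⟩)
          simp only [Finset.mem_insert, Finset.mem_singleton]
          push_neg
          exact ⟨fun hh => hx1κ hh.symm, hxκlam⟩
        obtain ⟨e, he, hu⟩ := h₁.2.2 v hvM₁
        exact ⟨e, ⟨(hswap₂ hRv he.2).2 he.1, he.2⟩,
          fun e' he' => hu e' ⟨(hswap₂ hRv he'.2).1 he'.1, he'.2⟩⟩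
      · have hvM₂ : v ∉ ((Finset.Icc 1 (2 * n)).image x) \ {x 1, x κ} := by
          intro hvM
          obtain ⟨hvim, hvn⟩ := Finset.mem_sdiff.1 hvM
          have hv' : v ∈ ({x 1, x lam} : Finset V) := by
            by_contra hc
            exact hv (Finset.mem_sdiff.2 ⟨hvim, hc⟩)
          simp only [Finset.mem_insert, Finset.mem_singleton] at hvn
          push_neg at hvn
          rcases Finset.mem_insert.1 hv' with rfl | hv''
          · exact hvn.1 rfl
          · rw [Finset.mem_singleton] at hv''
            subst hv''
            exact hRv hRlam
        obtain ⟨e, he, hu⟩ := h₂.2.2 v hvM₂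
        exact ⟨e, ⟨(hstay₂ hRv he.2).2 he.1, he.2⟩,
          fun e' he' => hu e' ⟨(hstay₂ hRv he'.2).1 he'.1, he'.2⟩⟩

end Swap

section Signs
variable {α : Type*} [DecidableEq α]

lemma neg_one_pow_congr_zmod {a b : ℕ} (h : (a : ZMod 2) = (b : ZMod 2)) :
    (-1 : ℂ) ^ a = (-1 : ℂ) ^ b := by
  rw [ZMod.natCast_eq_natCast_iff'] at h
  rw [neg_one_pow_eq_pow_mod_two, h, ← neg_one_pow_eq_pow_mod_two]

lemma two_zmod_two : (2 : ZMod 2) = 0 := by decide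

lemma card_symmDiff_cast (s t : Finset α) :
    (((s ∆ t).card : ZMod 2)) = (s.card : ZMod 2) + (t.card : ZMod 2) := by
  have key : (s ∆ t) ∪ (s ∩ t) = s ∪ t := by
    have h := symmDiff_sup_inf (a := s) (b := t)
    simpa [Finset.sup_eq_union, Finset.inf_eq_inter] using h
  have hdisj : Disjoint (s ∆ t) (s ∩ t) := by
    rw [← Finset.inf_eq_inter]
    exact disjoint_symmDiff_inf s t
  have h2 := Finset.card_union_add_card_inter s t
  have h4 : (s ∆ t).card + (s ∩ t).card + (s ∩ t).card = s.card + t.card := by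
    rw [← Finset.card_union_of_disjoint hdisj, key]
    omega
  have h5 := congrArg (Nat.cast : ℕ → ZMod 2) h4
  push_cast at h5
  linear_combination h5 - ((s ∩ t).card : ZMod 2) * two_zmod_two

lemma inter_symmDiff_right (A B C : Finset α) : (A ∆ B) ∩ C = (A ∩ C) ∆ (B ∩ C) := by
  ext e
  simp only [Finset.mem_symmDiff, Finset.mem_inter]
  tauto

lemma card_inter_symmDiff_cast (A γ' C : Finset α) :
    ((((A ∆ γ') ∩ C).card : ZMod 2)) = ((A ∩ C).card : ZMod 2) + ((γ' ∩ C).card : ZMod 2) := by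
  rw [inter_symmDiff_right, card_symmDiff_cast]

lemma prod_swap_eq {K : Sym2 α → ℂ} {A B γ' : Finset (Sym2 α)} (hγ : γ' ⊆ A ∆ B) :
    (∏ b ∈ A ∆ γ', K b) * (∏ b ∈ B ∆ γ', K b) = (∏ b ∈ A, K b) * (∏ b ∈ B, K b) := by
  have dA : A ∆ γ' = (A \ γ') ∪ (γ' ∩ B) := by
    ext e
    have hh := @hγ e
    simp only [Finset.mem_symmDiff, Finset.mem_union, Finset.mem_sdiff, Finset.mem_inter] at hh ⊢
    tauto
  have dB : B ∆ γ' = (B \ γ') ∪ (γ' ∩ A) := by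
    ext e
    have hh := @hγ e
    simp only [Finset.mem_symmDiff, Finset.mem_union, Finset.mem_sdiff, Finset.mem_inter] at hh ⊢
    tauto
  have disjA : Disjoint (A \ γ') (γ' ∩ B) := by
    rw [Finset.disjoint_left]
    intro e he he'
    exact (Finset.mem_sdiff.1 he).2 (Finset.mem_inter.1 he').1
  have disjB : Disjoint (B \ γ') (γ' ∩ A) := by
    rw [Finset.disjoint_left]
    intro e he he'
    exact (Finset.mem_sdiff.1 he).2 (Finset.mem_inter.1 he').1
  have pA : (∏ b ∈ A \ γ', K b) * (∏ b ∈ A ∩ γ', K b) = ∏ b ∈ A, K b := by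
    rw [← Finset.sdiff_inter_self_left A γ']
    exact Finset.prod_sdiff Finset.inter_subset_left
  have pB : (∏ b ∈ B \ γ', K b) * (∏ b ∈ B ∩ γ', K b) = ∏ b ∈ B, K b := by
    rw [← Finset.sdiff_inter_self_left B γ']
    exact Finset.prod_sdiff Finset.inter_subset_left
  rw [dA, dB, Finset.prod_union disjA, Finset.prod_union disjB, ← pA, ← pB,
    Finset.inter_comm γ' B, Finset.inter_comm γ' A]
  ring

end Signs

/-- Switching principle II, second identity. -/
theorem switching_principle_II_second {V : Type*} [Fintype V] [DecidableEq V]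
    (G : SimpleGraph V) (K : Sym2 V → ℂ) (n : ℕ) (hn : 1 ≤ n)
    (x : ℕ → V) (ℓ : ℕ → Finset (Sym2 V))
    (hinj : ∀ i ∈ Finset.Icc 1 (2 * n), ∀ j ∈ Finset.Icc 1 (2 * n), x i = x j → i = j)
    (hℓ : ∀ j ∈ Finset.Icc 1 (2 * n), ↑(ℓ j) ⊆ G.edgeSet)
    -- intersection-parity hypothesis: for every component `γ` of an overlay
    -- joining the monomers `x k` and `x l`, the parity of the intersection
    -- numbers with the disorder lines is `(-1)^(k-l-1)`
    (hpar : ∀ M₁ M₂ : Finset V, Disjoint M₁ M₂ →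
      M₁ ∪ M₂ = (Finset.Icc 1 (2 * n)).image x →
      ∀ ω₁ ω₂ : Finset (Sym2 V), IsDimerCover G M₁ ω₁ → IsDimerCover G M₂ ω₂ →
      ∀ k ∈ Finset.Icc 1 (2 * n), ∀ l ∈ Finset.Icc 1 (2 * n), k ≠ l →
        (symmGraph ω₁ ω₂).Reachable (x k) (x l) →
        (-1 : ℂ) ^ (∑ j ∈ Finset.Icc 1 (2 * n),
            ((((ω₁ ∆ ω₂).filter
                (fun e => ∃ u, u ∈ e ∧ (symmGraph ω₁ ω₂).Reachable (x k) u)) ∩ ℓ j).card)) *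
          (-1 : ℂ) ^ ((ω₁ ∩ ℓ k).card + (ω₁ ∩ ℓ l).card +
            (ω₂ ∩ ℓ k).card + (ω₂ ∩ ℓ l).card) =
          (-1 : ℂ) ^ ((k : ℤ) - (l : ℤ) - 1))
    (k l m : ℕ) (hk : k ∈ Finset.Icc 2 (2 * n)) (hl : l ∈ Finset.Icc 2 (2 * n))
    (hm : m ∈ Finset.Icc 2 (2 * n)) (hkl : k ≠ l) (hlm : l ≠ m) (hkm : k ≠ m) :
    Wdouble G K ℓ {x 1, x k} {1, k}
        (((Finset.Icc 1 (2 * n)).image x) \ {x 1, x k}) ((Finset.Icc 2 (2 * n)).erase k)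
        [(x 1, x m), (x k, x l)] =
      (-1 : ℂ) ^ ((k : ℤ) - (l : ℤ) - 1) *
        Wdouble G K ℓ {x 1, x l} {1, l}
          (((Finset.Icc 1 (2 * n)).image x) \ {x 1, x l}) ((Finset.Icc 2 (2 * n)).erase l)
          [(x 1, x m), (x k, x l)] := by
  have hk1 : k ∈ Finset.Icc 1 (2 * n) := by simp only [Finset.mem_Icc] at hk ⊢; omega
  have hl1 : l ∈ Finset.Icc 1 (2 * n) := by simp only [Finset.mem_Icc] at hl ⊢; omega
  have h1mem : (1 : ℕ) ∈ Finset.Icc 1 (2 * n) := by simp only [Finset.mem_Icc]; omega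
  have h1k : (1 : ℕ) ≠ k := by simp only [Finset.mem_Icc] at hk; omega
  have h1l : (1 : ℕ) ≠ l := by simp only [Finset.mem_Icc] at hl; omega
  rw [Wdouble, Wdouble, Finset.mul_sum]
  refine Finset.sum_nbij'
    (fun p => (p.1 ∆ gam p.1 p.2 (x k), p.2 ∆ gam p.1 p.2 (x k)))
    (fun q => (q.1 ∆ gam q.1 q.2 (x k), q.2 ∆ gam q.1 q.2 (x k)))
    ?_ ?_ ?_ ?_ ?_
  · -- forward membership
    intro p hp
    simp only [Finset.mem_filter, Finset.mem_univ, true_and] at hp ⊢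
    obtain ⟨hc₁, hc₂, hC⟩ := hp
    have hC2 : (symmGraph p.1 p.2).Reachable (x k) (x l) := hC (x k, x l) (by simp)
    obtain ⟨hcov1, hcov2⟩ := swap_covers hn hinj hk hl hkl hc₁ hc₂ hC2
    refine ⟨hcov1, hcov2, fun c hc => ?_⟩
    rw [symmGraph_swap]
    exact hC c hc
  · -- backward membership
    intro q hq
    simp only [Finset.mem_filter, Finset.mem_univ, true_and] at hq ⊢
    obtain ⟨hc₁, hc₂, hC⟩ := hq
    have hC2 : (symmGraph q.1 q.2).Reachable (x k) (x l) := hC (x k, x l) (by simp)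
    have hrebase : gam q.1 q.2 (x k) = gam q.1 q.2 (x l) := gamma_rebase hC2
    obtain ⟨hcov1, hcov2⟩ := swap_covers hn hinj hl hk hkl.symm hc₁ hc₂ hC2.symm
    rw [hrebase]
    refine ⟨hcov1, hcov2, fun c hc => ?_⟩
    rw [symmGraph_swap]
    exact hC c hc
  · -- left inverse
    intro p _
    dsimp only
    rw [gam_swap_invariant, symmDiff_symmDiff_cancel_right, symmDiff_symmDiff_cancel_right]
  · -- right inverse
    intro q _
    dsimp only
    rw [gam_swap_invariant, symmDiff_symmDiff_cancel_right, symmDiff_symmDiff_cancel_right]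
  · -- values
    intro p hp
    obtain ⟨ω₁, ω₂⟩ := p
    simp only [Finset.mem_filter, Finset.mem_univ, true_and] at hp
    obtain ⟨hc₁, hc₂, hC⟩ := hp
    have hC2 : (symmGraph ω₁ ω₂).Reachable (x k) (x l) := hC (x k, x l) (by simp)
    have hdisj : Disjoint ({x 1, x k} : Finset V)
        ((((Finset.Icc 1 (2 * n)).image x)) \ {x 1, x k}) := disjoint_sdiff_self_right
    have hsub : ({x 1, x k} : Finset V) ⊆ (Finset.Icc 1 (2 * n)).image x := by
      intro v hv
      simp only [Finset.mem_insert, Finset.mem_singleton] at hv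
      rcases hv with rfl | rfl
      · exact Finset.mem_image.2 ⟨1, h1mem, rfl⟩
      · exact Finset.mem_image.2 ⟨k, hk1, rfl⟩
    have hunion : ({x 1, x k} : Finset V) ∪ ((((Finset.Icc 1 (2 * n)).image x)) \ {x 1, x k}) =
        (Finset.Icc 1 (2 * n)).image x := Finset.union_sdiff_of_subset hsub
    have hpar' := hpar {x 1, x k} _ hdisj hunion ω₁ ω₂ hc₁ hc₂ k hk1 l hl1 hkl hC2
    have hpar2 : (-1 : ℂ) ^ (∑ j ∈ Finset.Icc 1 (2 * n), ((gam ω₁ ω₂ (x k) ∩ ℓ j).card)) *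
          (-1 : ℂ) ^ ((ω₁ ∩ ℓ k).card + (ω₁ ∩ ℓ l).card +
            (ω₂ ∩ ℓ k).card + (ω₂ ∩ ℓ l).card) =
        (-1 : ℂ) ^ ((k : ℤ) - (l : ℤ) - 1) := hpar'
    dsimp only
    rw [← hpar2]
    have hprod := prod_swap_eq (K := K) (gam_subset ω₁ ω₂ (x k))
    have key : ∀ P₁ P₂ P₁' P₂' s₁ s₂ s₁' s₂' XG : ℂ, P₁' * P₂' = P₁ * P₂ →
        s₁ * s₂ = XG * (s₁' * s₂') →
        P₁ * s₁ * (P₂ * s₂) = XG * (P₁' * s₁' * (P₂' * s₂')) := by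
      intro P₁ P₂ P₁' P₂' s₁ s₂ s₁' s₂' XG h1 h2
      calc P₁ * s₁ * (P₂ * s₂) = (P₁ * P₂) * (s₁ * s₂) := by ring
        _ = (P₁' * P₂') * (XG * (s₁' * s₂')) := by rw [h1, h2]
        _ = XG * (P₁' * s₁' * (P₂' * s₂')) := by ring
    have hsign : (-1 : ℂ) ^ (∑ j ∈ ({1, k} : Finset ℕ), (ω₁ ∩ ℓ j).card) *
        (-1 : ℂ) ^ (∑ j ∈ (Finset.Icc 2 (2 * n)).erase k, (ω₂ ∩ ℓ j).card) =
        ((-1 : ℂ) ^ (∑ j ∈ Finset.Icc 1 (2 * n), ((gam ω₁ ω₂ (x k) ∩ ℓ j).card)) *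
          (-1 : ℂ) ^ ((ω₁ ∩ ℓ k).card + (ω₁ ∩ ℓ l).card +
            (ω₂ ∩ ℓ k).card + (ω₂ ∩ ℓ l).card)) *
        ((-1 : ℂ) ^ (∑ j ∈ ({1, l} : Finset ℕ), ((ω₁ ∆ gam ω₁ ω₂ (x k)) ∩ ℓ j).card) *
          (-1 : ℂ) ^ (∑ j ∈ (Finset.Icc 2 (2 * n)).erase l,
            ((ω₂ ∆ gam ω₁ ω₂ (x k)) ∩ ℓ j).card)) := by
      rw [← pow_add, ← pow_add, ← pow_add, ← pow_add]
      apply neg_one_pow_congr_zmod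
      push_cast
      have f1 : ∑ j ∈ ({1, k} : Finset ℕ), ((ω₁ ∩ ℓ j).card : ZMod 2) =
          ((ω₁ ∩ ℓ 1).card : ZMod 2) + ((ω₁ ∩ ℓ k).card : ZMod 2) := Finset.sum_pair h1k
      have f2 : ∑ j ∈ ({1, l} : Finset ℕ), (((ω₁ ∆ gam ω₁ ω₂ (x k)) ∩ ℓ j).card : ZMod 2) =
          (((ω₁ ∆ gam ω₁ ω₂ (x k)) ∩ ℓ 1).card : ZMod 2) +
            (((ω₁ ∆ gam ω₁ ω₂ (x k)) ∩ ℓ l).card : ZMod 2) := Finset.sum_pair h1l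
      have hIcc : Finset.Icc 1 (2 * n) = insert 1 (Finset.Icc 2 (2 * n)) := by
        ext j; simp only [Finset.mem_Icc, Finset.mem_insert]; omega
      have f3 : ∑ j ∈ Finset.Icc 1 (2 * n), ((gam ω₁ ω₂ (x k) ∩ ℓ j).card : ZMod 2) =
          ((gam ω₁ ω₂ (x k) ∩ ℓ 1).card : ZMod 2) +
            ∑ j ∈ Finset.Icc 2 (2 * n), ((gam ω₁ ω₂ (x k) ∩ ℓ j).card : ZMod 2) := by
        rw [hIcc, Finset.sum_insert (by simp [Finset.mem_Icc])]
      have f4 : ∑ j ∈ Finset.Icc 2 (2 * n), ((gam ω₁ ω₂ (x k) ∩ ℓ j).card : ZMod 2) =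
          ((gam ω₁ ω₂ (x k) ∩ ℓ l).card : ZMod 2) +
            ∑ j ∈ (Finset.Icc 2 (2 * n)).erase l,
              ((gam ω₁ ω₂ (x k) ∩ ℓ j).card : ZMod 2) :=
        (Finset.add_sum_erase _ _ hl).symm
      have f5 : ∑ j ∈ Finset.Icc 2 (2 * n), ((ω₂ ∩ ℓ j).card : ZMod 2) =
          ((ω₂ ∩ ℓ k).card : ZMod 2) +
            ∑ j ∈ (Finset.Icc 2 (2 * n)).erase k, ((ω₂ ∩ ℓ j).card : ZMod 2) :=
        (Finset.add_sum_erase _ _ hk).symm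
      have f6 : ∑ j ∈ Finset.Icc 2 (2 * n), ((ω₂ ∩ ℓ j).card : ZMod 2) =
          ((ω₂ ∩ ℓ l).card : ZMod 2) +
            ∑ j ∈ (Finset.Icc 2 (2 * n)).erase l, ((ω₂ ∩ ℓ j).card : ZMod 2) :=
        (Finset.add_sum_erase _ _ hl).symm
      have f9 : ∑ j ∈ (Finset.Icc 2 (2 * n)).erase l,
            (((ω₂ ∆ gam ω₁ ω₂ (x k)) ∩ ℓ j).card : ZMod 2) =
          (∑ j ∈ (Finset.Icc 2 (2 * n)).erase l, ((ω₂ ∩ ℓ j).card : ZMod 2)) +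
            ∑ j ∈ (Finset.Icc 2 (2 * n)).erase l,
              ((gam ω₁ ω₂ (x k) ∩ ℓ j).card : ZMod 2) := by
        rw [← Finset.sum_add_distrib]
        exact Finset.sum_congr rfl fun j _ => card_inter_symmDiff_cast _ _ _
      have f71 : (((ω₁ ∆ gam ω₁ ω₂ (x k)) ∩ ℓ 1).card : ZMod 2) =
          ((ω₁ ∩ ℓ 1).card : ZMod 2) + ((gam ω₁ ω₂ (x k) ∩ ℓ 1).card : ZMod 2) :=
        card_inter_symmDiff_cast _ _ _
      have f7l : (((ω₁ ∆ gam ω₁ ω₂ (x k)) ∩ ℓ l).card : ZMod 2) =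
          ((ω₁ ∩ ℓ l).card : ZMod 2) + ((gam ω₁ ω₂ (x k) ∩ ℓ l).card : ZMod 2) :=
        card_inter_symmDiff_cast _ _ _
      rw [f1, f2, f71, f7l, f3, f4, f9]
      linear_combination f6 - f5 -
        (((ω₂ ∩ ℓ k).card : ZMod 2) + ((gam ω₁ ω₂ (x k) ∩ ℓ 1).card : ZMod 2) +
          ((gam ω₁ ω₂ (x k) ∩ ℓ l).card : ZMod 2) +
          (∑ j ∈ (Finset.Icc 2 (2 * n)).erase l,
            ((gam ω₁ ω₂ (x k) ∩ ℓ j).card : ZMod 2)) +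
          ((ω₁ ∩ ℓ l).card : ZMod 2)) * two_zmod_two
    exact key _ _ _ _ _ _ _ _ _ hprod hsign
end
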